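/- Let θ₀ ∈ ℂ, a ∈ ℂ∖{0}, and let Λ₀ be the 2×2 matrix with rows (θ₀/2 + a, −1) and (a(θ₀+a), −θ₀/2 − a). Then the system t·dU₀/dt = [U∞, Λ₀ + U₀], t·dU∞/dt = t·[J, −Λ₀ − U₀ + U∞] admits a solution (U₀(t), U∞(t)) holomorphic in a neighborhood of t = 0, given by convergent power series U₀(t) = Σ_{j≥1} U⁰_j t^j and U∞(t) = Σ_{j≥1} U^∞_j t^j, where the entries of every coefficient matrix U⁰_j, U^∞_j lie in ℚ[θ₀, a]; moreover both diagonal entries of U∞(t) vanish identically. -/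

import Mathlib

noncomputable section
open Complex

def Jmat : Matrix (Fin 2) (Fin 2) ℂ := !![1, 0; 0, -1]

namespace SchAux

abbrev Mat := Matrix (Fin 2) (Fin 2) ℂ

def Lm (t0 a : ℂ) : Mat := !![t0 / 2 + a, -1; a * (t0 + a), -t0 / 2 - a]

def comm (X Y : Mat) : Mat := X * Y - Y * X

def co (t0 a : ℂ) : ℕ → Mat × Mat
  | 0 =>
    (comm (comm Jmat (-(Lm t0 a))) (Lm t0 a), comm Jmat (-(Lm t0 a)))
  | n + 1 =>
    let C : Mat := ((n : ℂ) + 2)⁻¹ • comm Jmat ((co t0 a n).2 - (co t0 a n).1)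
    (((n : ℂ) + 2)⁻¹ • (comm C (Lm t0 a) +
      ∑ i : Fin (n + 1), comm (co t0 a i).2 (co t0 a (n - (i:ℕ))).1), C)
  decreasing_by
  all_goals first | exact i.isLt | omega

lemma co_zero (t0 a : ℂ) : co t0 a 0 =
    (comm (comm Jmat (-(Lm t0 a))) (Lm t0 a), comm Jmat (-(Lm t0 a))) := by
  rw [co.eq_def]

lemma co_succ (t0 a : ℂ) (n : ℕ) : co t0 a (n+1) =
    (((n : ℂ) + 2)⁻¹ • (comm (((n : ℂ) + 2)⁻¹ • comm Jmat ((co t0 a n).2 - (co t0 a n).1)) (Lm t0 a) +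
      ∑ i : Fin (n + 1), comm (co t0 a i).2 (co t0 a (n - (i:ℕ))).1),
     ((n : ℂ) + 2)⁻¹ • comm Jmat ((co t0 a n).2 - (co t0 a n).1)) := by
  rw [co.eq_def]


def ee (X : Mat) : ℝ := ‖X 0 0‖ + ‖X 0 1‖ + ‖X 1 0‖ + ‖X 1 1‖

lemma ee_nonneg (X : Mat) : 0 ≤ ee X := by
  unfold ee; positivity

lemma entry_le (X : Mat) (i j : Fin 2) : ‖X i j‖ ≤ ee X := by
  unfold ee
  have h00 := norm_nonneg (X 0 0); have h01 := norm_nonneg (X 0 1)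
  have h10 := norm_nonneg (X 1 0); have h11 := norm_nonneg (X 1 1)
  fin_cases i <;> fin_cases j
  · show ‖X 0 0‖ ≤ _; linarith
  · show ‖X 0 1‖ ≤ _; linarith
  · show ‖X 1 0‖ ≤ _; linarith
  · show ‖X 1 1‖ ≤ _; linarith

lemma ee_add (X Y : Mat) : ee (X + Y) ≤ ee X + ee Y := by
  unfold ee
  simp only [Matrix.add_apply]
  have h := fun (i j : Fin 2) => norm_add_le (X i j) (Y i j)
  linarith [h 0 0, h 0 1, h 1 0, h 1 1]

lemma ee_sub (X Y : Mat) : ee (X - Y) ≤ ee X + ee Y := by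
  unfold ee
  simp only [Matrix.sub_apply]
  have h := fun (i j : Fin 2) => norm_sub_le (X i j) (Y i j)
  linarith [h 0 0, h 0 1, h 1 0, h 1 1]

lemma ee_neg (X : Mat) : ee (-X) = ee X := by
  unfold ee; simp [Matrix.neg_apply]

lemma ee_smul (z : ℂ) (X : Mat) : ee (z • X) = ‖z‖ * ee X := by
  unfold ee; simp only [Matrix.smul_apply, norm_smul]; ring

lemma ee_mul (X Y : Mat) : ee (X * Y) ≤ ee X * ee Y := by
  have e8 : ∀ i j : Fin 2, ‖(X * Y) i j‖ ≤ ‖X i 0‖ * ‖Y 0 j‖ + ‖X i 1‖ * ‖Y 1 j‖ := by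
    intro i j
    rw [Matrix.mul_apply, Fin.sum_univ_two]
    exact (norm_add_le _ _).trans (by rw [norm_mul, norm_mul])
  unfold ee
  nlinarith [e8 0 0, e8 0 1, e8 1 0, e8 1 1,
    mul_nonneg (norm_nonneg (X 0 0)) (norm_nonneg (Y 0 0)),
    mul_nonneg (norm_nonneg (X 0 0)) (norm_nonneg (Y 0 1)),
    mul_nonneg (norm_nonneg (X 0 0)) (norm_nonneg (Y 1 0)),
    mul_nonneg (norm_nonneg (X 0 0)) (norm_nonneg (Y 1 1)),
    mul_nonneg (norm_nonneg (X 0 1)) (norm_nonneg (Y 0 0)),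
    mul_nonneg (norm_nonneg (X 0 1)) (norm_nonneg (Y 0 1)),
    mul_nonneg (norm_nonneg (X 0 1)) (norm_nonneg (Y 1 0)),
    mul_nonneg (norm_nonneg (X 0 1)) (norm_nonneg (Y 1 1)),
    mul_nonneg (norm_nonneg (X 1 0)) (norm_nonneg (Y 0 0)),
    mul_nonneg (norm_nonneg (X 1 0)) (norm_nonneg (Y 0 1)),
    mul_nonneg (norm_nonneg (X 1 0)) (norm_nonneg (Y 1 0)),
    mul_nonneg (norm_nonneg (X 1 0)) (norm_nonneg (Y 1 1)),
    mul_nonneg (norm_nonneg (X 1 1)) (norm_nonneg (Y 0 0)),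
    mul_nonneg (norm_nonneg (X 1 1)) (norm_nonneg (Y 0 1)),
    mul_nonneg (norm_nonneg (X 1 1)) (norm_nonneg (Y 1 0)),
    mul_nonneg (norm_nonneg (X 1 1)) (norm_nonneg (Y 1 1))]

lemma ee_comm (X Y : Mat) : ee (comm X Y) ≤ 2 * (ee X * ee Y) := by
  have h1 := ee_mul X Y
  have h2 := ee_mul Y X
  have h3 := ee_sub (X * Y) (Y * X)
  unfold comm
  nlinarith [ee_nonneg X, ee_nonneg Y]

lemma ee_sum {ι : Type*} (s : Finset ι) (f : ι → Mat) :
    ee (∑ i ∈ s, f i) ≤ ∑ i ∈ s, ee (f i) := by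
  classical
  induction s using Finset.cons_induction with
  | empty => simp [ee]
  | cons a s ha ih =>
    rw [Finset.sum_cons, Finset.sum_cons]
    exact (ee_add _ _).trans (by linarith)

def dd : Fin 2 → ℂ := ![1, -1]

lemma commJ_apply (X : Mat) (i j : Fin 2) :
    comm Jmat X i j = (dd i - dd j) * X i j := by
  fin_cases i <;> fin_cases j <;>
    simp only [comm, Matrix.sub_apply, Matrix.mul_apply, Fin.sum_univ_two, Jmat, dd,
      Fin.zero_eta, Fin.mk_one, Fin.isValue, Matrix.cons_val', Matrix.cons_val_zero,
      Matrix.cons_val_one, Matrix.head_cons, Matrix.empty_val', Matrix.cons_val_fin_one,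
      Matrix.head_fin_const, Matrix.of_apply] <;> ring

lemma ee_commJ (X : Mat) : ee (comm Jmat X) ≤ 2 * ee X := by
  have h : ∀ i j : Fin 2, ‖comm Jmat X i j‖ ≤ 2 * ‖X i j‖ := by
    intro i j
    rw [commJ_apply, norm_mul]
    have : ‖dd i - dd j‖ ≤ 2 := by
      fin_cases i <;> fin_cases j <;> simp [dd] <;> norm_num
    nlinarith [norm_nonneg (X i j), norm_nonneg (dd i - dd j)]
  unfold ee
  linarith [h 0 0, h 0 1, h 1 0, h 1 1]


def ell (t0 a : ℂ) : ℝ := ee (Lm t0 a)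
def Ac (t0 a : ℂ) : ℝ := (2 * ell t0 a + 2)⁻¹
def Mc (t0 a : ℂ) : ℝ := (2 * ell t0 a + 2) * (2 * ell t0 a + 3)

variable (t0 a : ℂ)

lemma ell_nonneg : 0 ≤ ell t0 a := ee_nonneg _
lemma Ac_pos : 0 < Ac t0 a := by
  have := ell_nonneg t0 a; unfold Ac; positivity
lemma Ac_le_half : Ac t0 a ≤ 1/2 := by
  have h := ell_nonneg t0 a
  unfold Ac
  rw [inv_le_comm₀] <;> [skip; linarith; norm_num]
  norm_num; linarith
lemma Mc_pos : 0 < Mc t0 a := by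
  have := ell_nonneg t0 a; unfold Mc; positivity
lemma Ac_mul_Mc : Ac t0 a * Mc t0 a = 2 * ell t0 a + 3 := by
  have h := ell_nonneg t0 a
  unfold Ac Mc
  rw [← mul_assoc, inv_mul_cancel₀ (by linarith), one_mul]
lemma Ac_mul : Ac t0 a * (2 * ell t0 a + 2) = 1 := by
  have h := ell_nonneg t0 a
  exact inv_mul_cancel₀ (by linarith)

lemma norm_inv_n2 (n : ℕ) : ‖((n:ℂ)+2)⁻¹‖ = ((n:ℝ)+2)⁻¹ := by
  rw [norm_inv]
  congr 1
  have h : ((n:ℂ)+2) = ((n+2:ℕ):ℂ) := by push_cast; ring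
  rw [h, Complex.norm_natCast]; push_cast; ring

lemma co_bound (n : ℕ) :
    ee (co t0 a n).1 ≤ Mc t0 a ^ (n+1) ∧ ee (co t0 a n).2 ≤ Ac t0 a * Mc t0 a ^ (n+1) := by
  have hl := ell_nonneg t0 a
  have hAp := Ac_pos t0 a
  have hAh := Ac_le_half t0 a
  have hMp := Mc_pos t0 a
  have hAM := Ac_mul_Mc t0 a
  have hA2 := Ac_mul t0 a
  induction n using Nat.strong_induction_on with
  | _ n ih =>
    match n with
    | 0 =>
      rw [co_zero]
      have hC : ee (comm Jmat (-(Lm t0 a))) ≤ Ac t0 a * Mc t0 a ^ 1 := by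
        have h1 := ee_commJ (-(Lm t0 a))
        rw [ee_neg] at h1
        rw [pow_one, hAM]
        unfold ell at *
        linarith
      refine ⟨?_, hC⟩
      have h2 := ee_comm (comm Jmat (-(Lm t0 a))) (Lm t0 a)
      have h3 : ee (comm Jmat (-(Lm t0 a))) ≤ 2 * ell t0 a + 3 := by
        rw [pow_one, hAM] at hC; exact hC
      have h4 := ee_nonneg (comm Jmat (-(Lm t0 a)))
      rw [pow_one]
      unfold Mc
      unfold ell at *
      nlinarith [ee_nonneg (Lm t0 a)]
    | Nat.succ n =>
      obtain ⟨hBn, hCn⟩ := ih n (Nat.lt_succ_self n)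
      have hn0 : (0:ℝ) ≤ (n:ℝ) := Nat.cast_nonneg n
      have hn2 : (0:ℝ) < (n:ℝ)+2 := by linarith
      have hP : (0:ℝ) < Mc t0 a ^ (n+1) := pow_pos hMp _
      have hQ : (0:ℝ) < Mc t0 a ^ (n+2) := pow_pos hMp _
      rw [co_succ]
      set C : Mat := ((n : ℂ) + 2)⁻¹ • comm Jmat ((co t0 a n).2 - (co t0 a n).1) with hCdef
      have hC2 : ee C ≤ Ac t0 a * Mc t0 a ^ (n+2) := by
        rw [hCdef, ee_smul, norm_inv_n2]
        have h1 := ee_commJ ((co t0 a n).2 - (co t0 a n).1)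
        have h2 := ee_sub (co t0 a n).2 (co t0 a n).1
        have h3 : ee (comm Jmat ((co t0 a n).2 - (co t0 a n).1)) ≤
            2 * ((Ac t0 a + 1) * Mc t0 a ^ (n+1)) := by nlinarith
        calc ((n:ℝ)+2)⁻¹ * ee (comm Jmat ((co t0 a n).2 - (co t0 a n).1))
            ≤ ((n:ℝ)+2)⁻¹ * (2 * ((Ac t0 a + 1) * Mc t0 a ^ (n+1))) := by
              apply mul_le_mul_of_nonneg_left h3 (by positivity)
          _ ≤ Ac t0 a * Mc t0 a ^ (n+2) := by
              rw [inv_mul_le_iff₀ hn2]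
              have e1 : Ac t0 a * Mc t0 a ^ (n+2) = (2*ell t0 a+3) * Mc t0 a ^ (n+1) := by
                rw [pow_succ, ← mul_assoc, mul_comm (Ac t0 a) (Mc t0 a ^ (n+1)), mul_assoc,
                  hAM, mul_comm]
              rw [e1]
              nlinarith [hP.le, mul_nonneg hn0 hP.le, mul_nonneg (mul_nonneg hn0 hl) hP.le,
                mul_le_mul_of_nonneg_right hAh hP.le, mul_nonneg hl hP.le]
      constructor
      · rw [ee_smul, norm_inv_n2]
        have hsum : ee (∑ i : Fin (n + 1), comm (co t0 a i).2 (co t0 a (n - (i:ℕ))).1) ≤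
            ((n:ℝ)+1) * (2 * (Ac t0 a * Mc t0 a ^ (n+2))) := by
          refine (ee_sum _ _).trans ?_
          have hper : ∀ i : Fin (n+1),
              ee (comm (co t0 a i).2 (co t0 a (n - (i:ℕ))).1) ≤
                2 * (Ac t0 a * Mc t0 a ^ (n+2)) := by
            intro i
            obtain ⟨_, hci⟩ := ih i i.isLt
            obtain ⟨hbn, _⟩ := ih (n - (i:ℕ)) (by omega)
            have h1 := ee_comm (co t0 a (i:ℕ)).2 (co t0 a (n - (i:ℕ))).1
            have hpow : Mc t0 a ^ ((i:ℕ)+1) * Mc t0 a ^ ((n - (i:ℕ))+1) = Mc t0 a ^ (n+2) := by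
              rw [← pow_add]; congr 1; omega
            have h2 : ee (co t0 a (i:ℕ)).2 * ee (co t0 a (n - (i:ℕ))).1 ≤
                Ac t0 a * Mc t0 a ^ (n+2) := by
              rw [← hpow, ← mul_assoc]
              have := ee_nonneg (co t0 a (i:ℕ)).2
              have := ee_nonneg (co t0 a (n - (i:ℕ))).1
              have hp1 : (0:ℝ) < Mc t0 a ^ ((i:ℕ)+1) := pow_pos hMp _
              have hp2 : (0:ℝ) < Mc t0 a ^ ((n - (i:ℕ))+1) := pow_pos hMp _
              nlinarith
            linarith
          calc (∑ i : Fin (n + 1), ee (comm (co t0 a i).2 (co t0 a (n - (i:ℕ))).1))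
              ≤ ∑ _i : Fin (n + 1), 2 * (Ac t0 a * Mc t0 a ^ (n+2)) :=
                Finset.sum_le_sum (fun i _ => hper i)
            _ = ((n:ℝ)+1) * (2 * (Ac t0 a * Mc t0 a ^ (n+2))) := by
                rw [Finset.sum_const, Finset.card_univ, Fintype.card_fin, nsmul_eq_mul]
                push_cast; ring
        have hcl : ee (comm C (Lm t0 a)) ≤ 2 * (Ac t0 a * Mc t0 a ^ (n+2) * ell t0 a) := by
          have h1 := ee_comm C (Lm t0 a)
          have h2 := ee_nonneg C
          have h3 := ell_nonneg t0 a
          unfold ell at *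
          nlinarith
        have hadd := ee_add (comm C (Lm t0 a))
          (∑ i : Fin (n + 1), comm (co t0 a i).2 (co t0 a (n - (i:ℕ))).1)
        rw [inv_mul_le_iff₀ hn2]
        have expand : Mc t0 a ^ (n+1+1) = Mc t0 a ^ (n+2) := rfl
        rw [expand]
        have hQid : Ac t0 a * Mc t0 a ^ (n+2) * (2*ell t0 a+2) = Mc t0 a ^ (n+2) := by
          have := congrArg (· * Mc t0 a ^ (n+2)) hA2
          simpa [mul_comm, mul_assoc, mul_left_comm] using this
        nlinarith [hQ.le, mul_nonneg hn0 hQ.le,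
          mul_le_mul_of_nonneg_right hAh (mul_nonneg hn0 hQ.le),
          mul_nonneg (mul_nonneg hAp.le hQ.le) hl]
      · exact hC2


lemma norm_n1 (n : ℕ) : ‖((n:ℂ)+1)‖ = (n:ℝ)+1 := by
  have h : ((n:ℂ)+1) = ((n+1:ℕ):ℂ) := by push_cast; ring
  rw [h, Complex.norm_natCast]; push_cast; ring

lemma geo_aux {s : ℝ} (h0 : 0 ≤ s) (h1 : s < 1) :
    Summable (fun n : ℕ => ((n:ℝ)+1) * s^(n+1)) := by
  have h1' : ‖s‖ < 1 := by rwa [Real.norm_eq_abs, _root_.abs_of_nonneg h0]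
  have h := summable_pow_mul_geometric_of_norm_lt_one 1 h1'
  have h2 : Summable (fun n : ℕ => ((n:ℝ)+1) * s^n) := by
    have := h.add (summable_geometric_of_lt_one h0 h1)
    exact this.congr (fun n => by rw [pow_one]; ring)
  exact (h2.mul_right s).congr (fun n => by rw [pow_succ]; ring)

lemma sumnorm {M : ℝ} (hM : 0 < M) (β : ℕ → ℂ) (C : ℝ)
    (hβ : ∀ n, ‖β n‖ ≤ C * (((n:ℝ)+1) * M^(n+1))) {t : ℂ}
    (ht : ‖t‖ < (2*M)⁻¹) :
    Summable (fun n => ‖β n * t^(n+1)‖) := by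
  have h0 : 0 ≤ M * ‖t‖ := mul_nonneg hM.le (norm_nonneg t)
  have h1 : M * ‖t‖ < 1 := by
    have h2 : M * ‖t‖ < M * (2*M)⁻¹ := by
      exact mul_lt_mul_of_pos_left ht hM
    have h3 : M * (2*M)⁻¹ = 1/2 := by field_simp
    linarith
  apply Summable.of_nonneg_of_le (fun n => norm_nonneg _) ?_ ((geo_aux h0 h1).mul_left C)
  intro n
  rw [norm_mul, norm_pow]
  calc ‖β n‖ * ‖t‖ ^ (n+1)
      ≤ C * (((n:ℝ)+1) * M^(n+1)) * ‖t‖ ^ (n+1) :=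
        mul_le_mul_of_nonneg_right (hβ n) (by positivity)
    _ = C * (((n:ℝ)+1) * (M * ‖t‖)^(n+1)) := by rw [mul_pow]; ring

lemma geo_aux2 {s : ℝ} (h0 : 0 ≤ s) (h1 : s < 1) :
    Summable (fun n : ℕ => ((n:ℝ)+1)^2 * s^(n+1)) := by
  have h1' : ‖s‖ < 1 := by rwa [Real.norm_eq_abs, _root_.abs_of_nonneg h0]
  have h2 := summable_pow_mul_geometric_of_norm_lt_one 2 h1'
  have h1s := (summable_pow_mul_geometric_of_norm_lt_one 1 h1').mul_left 2
  have h0s := summable_geometric_of_lt_one h0 h1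
  have := ((h2.add h1s).add h0s).mul_right s
  exact this.congr (fun n => by rw [pow_succ]; push_cast; ring)

lemma u_summable {M : ℝ} (hM : 0 < M) (C : ℝ) :
    Summable (fun n : ℕ => C * (((n:ℝ)+1)^2 * M^(n+1)) * ((2*M)⁻¹)^n) := by
  have h := (geo_aux2 (by norm_num : (0:ℝ) ≤ 1/2) (by norm_num : (1:ℝ)/2 < 1)).mul_left (C*(2*M))
  apply h.congr
  intro n
  have hMn : (M:ℝ)^n ≠ 0 := pow_ne_zero _ hM.ne'
  have e1 : ((2*M)⁻¹)^n = (1/2)^n * (M^n)⁻¹ := by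
    rw [mul_inv, mul_pow]
    norm_num
  rw [e1, pow_succ, pow_succ]
  field_simp
  ring

lemma ubound {M : ℝ} (hM : 0 < M) (β : ℕ → ℂ) (C : ℝ)
    (hβ : ∀ n, ‖β n‖ ≤ C * (((n:ℝ)+1) * M^(n+1))) {y : ℂ}
    (hy : ‖y‖ ≤ (2*M)⁻¹) (n : ℕ) :
    ‖β n * (((n:ℂ)+1) * y^n)‖ ≤ C * (((n:ℝ)+1)^2 * M^(n+1)) * ((2*M)⁻¹)^n := by
  rw [norm_mul, norm_mul, norm_n1, norm_pow]
  have h1 : ‖y‖ ^ n ≤ ((2*M)⁻¹)^n :=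
    pow_le_pow_left₀ (norm_nonneg y) hy n
  have h3 : ((n:ℝ)+1) * ‖y‖ ^ n ≤ ((n:ℝ)+1) * ((2*M)⁻¹)^n :=
    mul_le_mul_of_nonneg_left h1 (by positivity)
  have h4 : (0:ℝ) ≤ C * (((n:ℝ)+1) * M^(n+1)) := le_trans (norm_nonneg _) (hβ n)
  calc ‖β n‖ * (((n:ℝ)+1) * ‖y‖ ^ n)
      ≤ (C * (((n:ℝ)+1) * M^(n+1))) * (((n:ℝ)+1) * ((2*M)⁻¹)^n) :=
        mul_le_mul (hβ n) h3 (by positivity) h4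
    _ = C * (((n:ℝ)+1)^2 * M^(n+1)) * ((2*M)⁻¹)^n := by ring

lemma sumderiv {M : ℝ} (hM : 0 < M) (β : ℕ → ℂ) (C : ℝ)
    (hβ : ∀ n, ‖β n‖ ≤ C * (((n:ℝ)+1) * M^(n+1))) {t : ℂ}
    (ht : ‖t‖ < (2*M)⁻¹) :
    Summable (fun n => β n * (((n:ℂ)+1) * t^n)) :=
  Summable.of_norm_bounded (u_summable hM C) (ubound hM β C hβ ht.le)

lemma powser_hasDeriv {M : ℝ} (hM : 0 < M) (β : ℕ → ℂ) (C : ℝ)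
    (hβ : ∀ n, ‖β n‖ ≤ C * (((n:ℝ)+1) * M^(n+1))) {t : ℂ}
    (ht : t ∈ Metric.ball (0:ℂ) (2*M)⁻¹) :
    HasDerivAt (fun z => ∑' n, β n * z^(n+1)) (∑' n, β n * (((n:ℂ)+1) * t^n)) t := by
  have hR : (0:ℝ) < (2*M)⁻¹ := by positivity
  refine hasDerivAt_tsum_of_isPreconnected
    (u := fun n : ℕ => C * (((n:ℝ)+1)^2 * M^(n+1)) * ((2*M)⁻¹)^n)
    (g' := fun (n : ℕ) (y : ℂ) => β n * (((n:ℂ)+1) * y^n)) (y₀ := 0)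
    (u_summable hM C) Metric.isOpen_ball (convex_ball (0:ℂ) _).isPreconnected
    (fun n y _ => ?_) (fun n y hy => ?_) (Metric.mem_ball_self hR) ?_ ht
  · have h := (hasDerivAt_pow (n+1) y).const_mul (β n)
    refine h.congr_deriv ?_
    rw [show n+1-1 = n from rfl]
    push_cast
    ring
  · have hy' : ‖y‖ ≤ (2*M)⁻¹ := by
      rw [Metric.mem_ball, Complex.dist_eq, sub_zero] at hy
      exact hy.le
    exact ubound hM β C hβ hy' n
  · apply Summable.congr summable_zero
    intro n
    simp

lemma powser_analytic {M : ℝ} (hM : 0 < M) (β : ℕ → ℂ) (C : ℝ)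
    (hβ : ∀ n, ‖β n‖ ≤ C * (((n:ℝ)+1) * M^(n+1))) :
    AnalyticOnNhd ℂ (fun z => ∑' n, β n * z^(n+1)) (Metric.ball (0:ℂ) (2*M)⁻¹) := by
  apply DifferentiableOn.analyticOnNhd ?_ Metric.isOpen_ball
  exact fun z hz => (powser_hasDeriv hM β C hβ hz).differentiableAt.differentiableWithinAt


def SA (t0 a : ℂ) : Subalgebra ℚ ℂ :=
  (MvPolynomial.aeval (R := ℚ) ![t0, a] : MvPolynomial (Fin 2) ℚ →ₐ[ℚ] ℂ).range

lemma t0_mem : t0 ∈ SA t0 a := ⟨MvPolynomial.X 0, by simp⟩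
lemma a_mem : a ∈ SA t0 a := ⟨MvPolynomial.X 1, by simp⟩

lemma ratCast_mem (q : ℚ) : ((q:ℂ)) ∈ SA t0 a := by
  rw [← eq_ratCast (algebraMap ℚ ℂ) q]
  exact Subalgebra.algebraMap_mem _ q

lemma inv_n2_mem (n : ℕ) : ((n:ℂ)+2)⁻¹ ∈ SA t0 a := by
  have h : ((n:ℂ)+2)⁻¹ = ((((n:ℚ)+2)⁻¹ : ℚ) : ℂ) := by push_cast; ring
  rw [h]
  exact ratCast_mem t0 a _

lemma two_inv_mem : ((2:ℂ))⁻¹ ∈ SA t0 a := by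
  have h : ((2:ℂ))⁻¹ = ((((2:ℚ))⁻¹ : ℚ) : ℂ) := by push_cast; ring
  rw [h]
  exact ratCast_mem t0 a _

lemma L_mem : ∀ i j, Lm t0 a i j ∈ SA t0 a := by
  have h2 := two_inv_mem t0 a
  have ht := t0_mem t0 a
  have ha := a_mem t0 a
  intro i j
  fin_cases i <;> fin_cases j
  · show t0 / 2 + a ∈ _
    rw [div_eq_mul_inv]
    exact add_mem (mul_mem ht h2) ha
  · show (-1 : ℂ) ∈ _
    exact neg_mem (one_mem _)
  · show a * (t0 + a) ∈ _
    exact mul_mem ha (add_mem ht ha)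
  · show -t0 / 2 - a ∈ _
    rw [neg_div, div_eq_mul_inv]
    exact sub_mem (neg_mem (mul_mem ht h2)) ha

lemma J_mem : ∀ i j, Jmat i j ∈ SA t0 a := by
  intro i j
  fin_cases i <;> fin_cases j
  · exact one_mem _
  · exact zero_mem _
  · exact zero_mem _
  · exact neg_mem (one_mem _)

lemma mul_entry_mem {X Y : Mat} (hX : ∀ i j, X i j ∈ SA t0 a)
    (hY : ∀ i j, Y i j ∈ SA t0 a) : ∀ i j, (X * Y) i j ∈ SA t0 a := by
  intro i j
  rw [Matrix.mul_apply]
  exact Subalgebra.sum_mem _ fun k _ => mul_mem (hX i k) (hY k j)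

lemma comm_entry_mem {X Y : Mat} (hX : ∀ i j, X i j ∈ SA t0 a)
    (hY : ∀ i j, Y i j ∈ SA t0 a) : ∀ i j, comm X Y i j ∈ SA t0 a := by
  intro i j
  show (X * Y) i j - (Y * X) i j ∈ _
  exact sub_mem (mul_entry_mem t0 a hX hY i j) (mul_entry_mem t0 a hY hX i j)

lemma co_mem (n : ℕ) :
    (∀ i j, (co t0 a n).1 i j ∈ SA t0 a) ∧ (∀ i j, (co t0 a n).2 i j ∈ SA t0 a) := by
  induction n using Nat.strong_induction_on with
  | _ n ih =>
    match n with
    | 0 =>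
      rw [co_zero]
      have hL := L_mem t0 a
      have hnL : ∀ i j, (-(Lm t0 a)) i j ∈ SA t0 a := fun i j => by
        show -(Lm t0 a i j) ∈ _
        exact neg_mem (hL i j)
      have hC := comm_entry_mem t0 a (J_mem t0 a) hnL
      exact ⟨comm_entry_mem t0 a hC hL, hC⟩
    | Nat.succ n =>
      obtain ⟨hB, hC⟩ := ih n (Nat.lt_succ_self n)
      rw [co_succ]
      have hdiff : ∀ i j, ((co t0 a n).2 - (co t0 a n).1) i j ∈ SA t0 a := fun i j => by
        show (co t0 a n).2 i j - (co t0 a n).1 i j ∈ _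
        exact sub_mem (hC i j) (hB i j)
      have hCnew : ∀ i j,
          (((n : ℂ) + 2)⁻¹ • comm Jmat ((co t0 a n).2 - (co t0 a n).1)) i j ∈ SA t0 a := by
        intro i j
        show ((n : ℂ) + 2)⁻¹ * comm Jmat ((co t0 a n).2 - (co t0 a n).1) i j ∈ _
        exact mul_mem (inv_n2_mem t0 a n) (comm_entry_mem t0 a (J_mem t0 a) hdiff i j)
      refine ⟨?_, hCnew⟩
      intro i j
      show ((n : ℂ) + 2)⁻¹ * _ ∈ _
      refine mul_mem (inv_n2_mem t0 a n) ?_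
      show (comm _ (Lm t0 a) + _) i j ∈ _
      rw [Matrix.add_apply, Matrix.sum_apply]
      refine add_mem (comm_entry_mem t0 a hCnew (L_mem t0 a) i j)
        (Subalgebra.sum_mem _ fun k _ => ?_)
      obtain ⟨hci, _⟩ := (ih k k.isLt).symm
      obtain ⟨hb0, _⟩ := ih (n - (k:ℕ)) (by omega)
      exact comm_entry_mem t0 a hci hb0 i j


lemma n2_ne (n : ℕ) : ((n:ℂ)+2) ≠ 0 := by
  have h : ((n:ℂ)+2) = ((n+2:ℕ):ℂ) := by push_cast; ring
  rw [h]
  exact_mod_cast Nat.succ_ne_zero (n+1)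

lemma c0_zero : (co t0 a 0).1 = comm ((co t0 a 0).2) (Lm t0 a) := by rw [co_zero]

lemma ci_zero : (co t0 a 0).2 = comm Jmat (-(Lm t0 a)) := by rw [co_zero]

lemma ci_succ (n : ℕ) : (co t0 a (n+1)).2 =
    ((n:ℂ)+2)⁻¹ • comm Jmat ((co t0 a n).2 - (co t0 a n).1) := by rw [co_succ]

lemma c0_succ (n : ℕ) : (co t0 a (n+1)).1 =
    ((n:ℂ)+2)⁻¹ • (comm ((co t0 a (n+1)).2) (Lm t0 a) +
      ∑ i : Fin (n + 1), comm (co t0 a i).2 (co t0 a (n - (i:ℕ))).1) := by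
  conv_lhs => rw [co_succ]
  rw [ci_succ]

lemma ci_diag (n : ℕ) (i : Fin 2) : (co t0 a n).2 i i = 0 := by
  cases n with
  | zero => rw [ci_zero, commJ_apply]; simp
  | succ n =>
    rw [ci_succ]
    show ((n:ℂ)+2)⁻¹ * comm Jmat ((co t0 a n).2 - (co t0 a n).1) i i = 0
    rw [commJ_apply]
    simp

lemma entry1_plain (n : ℕ) (i j : Fin 2) : ‖(co t0 a n).1 i j‖ ≤ Mc t0 a^(n+1) :=
  (entry_le _ i j).trans (co_bound t0 a n).1

lemma entry2_plain (n : ℕ) (i j : Fin 2) : ‖(co t0 a n).2 i j‖ ≤ Mc t0 a^(n+1) := by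
  have h := (entry_le ((co t0 a n).2) i j).trans (co_bound t0 a n).2
  have hAh := Ac_le_half t0 a
  have hp : (0:ℝ) < Mc t0 a^(n+1) := pow_pos (Mc_pos t0 a) _
  nlinarith

lemma np1_ge_one (n : ℕ) : (1:ℝ) ≤ (n:ℝ)+1 := by
  have := Nat.cast_nonneg (α := ℝ) n; linarith

lemma entry1_bound (n : ℕ) (i j : Fin 2) :
    ‖(co t0 a n).1 i j‖ ≤ 1 * (((n:ℝ)+1) * Mc t0 a^(n+1)) := by
  have h := entry1_plain t0 a n i j
  have hp : (0:ℝ) < Mc t0 a^(n+1) := pow_pos (Mc_pos t0 a) _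
  nlinarith [np1_ge_one n]

lemma entry2_bound (n : ℕ) (i j : Fin 2) :
    ‖(co t0 a n).2 i j‖ ≤ 1 * (((n:ℝ)+1) * Mc t0 a^(n+1)) := by
  have h := entry2_plain t0 a n i j
  have hp : (0:ℝ) < Mc t0 a^(n+1) := pow_pos (Mc_pos t0 a) _
  nlinarith [np1_ge_one n]

lemma eq2_coeff (n : ℕ) (i j : Fin 2) :
    ((n:ℂ)+2) * (co t0 a (n+1)).2 i j =
      (dd i - dd j) * ((co t0 a n).2 i j - (co t0 a n).1 i j) := by
  rw [ci_succ]
  show ((n:ℂ)+2) * (((n:ℂ)+2)⁻¹ * comm Jmat ((co t0 a n).2 - (co t0 a n).1) i j) = _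
  rw [← mul_assoc, mul_inv_cancel₀ (n2_ne n), one_mul, commJ_apply]
  congr 1

lemma eq1_coeff (n : ℕ) (i j : Fin 2) :
    ((n:ℂ)+2) * (co t0 a (n+1)).1 i j =
      comm ((co t0 a (n+1)).2) (Lm t0 a) i j +
      ∑ kl ∈ Finset.HasAntidiagonal.antidiagonal n, comm ((co t0 a kl.1).2) ((co t0 a kl.2).1) i j := by
  conv_lhs => rw [c0_succ]
  show ((n:ℂ)+2) * (((n:ℂ)+2)⁻¹ * _) = _
  rw [← mul_assoc, mul_inv_cancel₀ (n2_ne n), one_mul, Matrix.add_apply, Matrix.sum_apply]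
  congr 1
  rw [Finset.Nat.sum_antidiagonal_eq_sum_range_succ
    (fun p q => comm ((co t0 a p).2) ((co t0 a q).1) i j) n]
  rw [← Fin.sum_univ_eq_sum_range (fun k => comm ((co t0 a k).2) ((co t0 a (n-k)).1) i j) (n+1)]

lemma sum_shift {M : ℝ} (hM : 0 < M) (β : ℕ → ℂ) (C : ℝ)
    (hβ : ∀ n, ‖β n‖ ≤ C * (((n:ℝ)+1) * M^(n+1))) {t : ℂ}
    (ht : ‖t‖ < (2*M)⁻¹) :
    Summable (fun n => β n * t^(n+2)) :=
  ((sumnorm hM β C hβ ht).of_norm.mul_right t).congr (fun n => by rw [pow_succ]; ring)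

def U0m (t0 a t : ℂ) : Mat := Matrix.of fun i j => ∑' n, (co t0 a n).1 i j * t^(n+1)
def Uim (t0 a t : ℂ) : Mat := Matrix.of fun i j => ∑' n, (co t0 a n).2 i j * t^(n+1)

lemma eq2_main (i j : Fin 2) {t : ℂ} (ht : ‖t‖ < (2 * Mc t0 a)⁻¹) :
    ∑' n, (co t0 a n).2 i j * (((n:ℂ)+1) * t^n) =
      (dd i - dd j) * (-(Lm t0 a) i j - U0m t0 a t i j + Uim t0 a t i j) := by
  have hM := Mc_pos t0 a
  have hsum_ci : Summable (fun n => (co t0 a n).2 i j * t^(n+1)) :=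
    (sumnorm hM _ 1 (fun n => entry2_bound t0 a n i j) ht).of_norm
  have hsum_c0 : Summable (fun n => (co t0 a n).1 i j * t^(n+1)) :=
    (sumnorm hM _ 1 (fun n => entry1_bound t0 a n i j) ht).of_norm
  have hs : Summable (fun n => (co t0 a n).2 i j * (((n:ℂ)+1) * t^n)) :=
    sumderiv hM _ 1 (fun n => entry2_bound t0 a n i j) ht
  rw [Summable.tsum_eq_zero_add hs]
  have tail : ∀ n : ℕ, (co t0 a (n+1)).2 i j * ((((n+1:ℕ):ℂ)+1) * t^(n+1)) =
      (dd i - dd j) * ((co t0 a n).2 i j * t^(n+1) - (co t0 a n).1 i j * t^(n+1)) := by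
    intro n
    have e := eq2_coeff t0 a n i j
    calc (co t0 a (n+1)).2 i j * ((((n+1:ℕ):ℂ)+1) * t^(n+1))
        = (((n:ℂ)+2) * (co t0 a (n+1)).2 i j) * t^(n+1) := by push_cast; ring
      _ = ((dd i - dd j) * ((co t0 a n).2 i j - (co t0 a n).1 i j)) * t^(n+1) := by rw [e]
      _ = (dd i - dd j) * ((co t0 a n).2 i j * t^(n+1) - (co t0 a n).1 i j * t^(n+1)) := by ring
  have htail : (∑' n, (co t0 a (n+1)).2 i j * ((((n+1:ℕ):ℂ)+1) * t^(n+1))) =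
      (dd i - dd j) * (Uim t0 a t i j - U0m t0 a t i j) := by
    rw [tsum_congr tail, tsum_mul_left, Summable.tsum_sub hsum_ci hsum_c0]
    rfl
  have hhead : (co t0 a 0).2 i j * ((((0:ℕ):ℂ)+1) * t^0) = (dd i - dd j) * (-(Lm t0 a) i j) := by
    rw [ci_zero, commJ_apply, Matrix.neg_apply]
    push_cast
    ring
  calc (co t0 a 0).2 i j * ((((0:ℕ):ℂ)+1) * t^0) +
        ∑' n, (co t0 a (n+1)).2 i j * ((((n+1:ℕ):ℂ)+1) * t^(n+1))
      = (dd i - dd j) * (-(Lm t0 a) i j) +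
        (dd i - dd j) * (Uim t0 a t i j - U0m t0 a t i j) := by rw [hhead, htail]
    _ = (dd i - dd j) * (-(Lm t0 a) i j - U0m t0 a t i j + Uim t0 a t i j) := by ring


lemma comm_apply (X Y : Mat) (i j : Fin 2) :
    comm X Y i j = (X i 0 * Y 0 j + X i 1 * Y 1 j) - (Y i 0 * X 0 j + Y i 1 * X 1 j) := by
  show (X * Y) i j - (Y * X) i j = _
  rw [Matrix.mul_apply, Matrix.mul_apply, Fin.sum_univ_two, Fin.sum_univ_two]

lemma comm_entry_bound (p q : ℕ) (i j : Fin 2) :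
    ‖comm ((co t0 a p).2) ((co t0 a q).1) i j‖ ≤ Mc t0 a ^ (p+1) * Mc t0 a ^ (q+1) := by
  have h1 := (entry_le (comm ((co t0 a p).2) ((co t0 a q).1)) i j).trans
    (ee_comm ((co t0 a p).2) ((co t0 a q).1))
  have h2 := (co_bound t0 a p).2
  have h3 := (co_bound t0 a q).1
  have hAh := Ac_le_half t0 a
  have hAp := (Ac_pos t0 a).le
  have hp : (0:ℝ) < Mc t0 a^(p+1) := pow_pos (Mc_pos t0 a) _
  have hq : (0:ℝ) < Mc t0 a^(q+1) := pow_pos (Mc_pos t0 a) _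
  have he2 := ee_nonneg ((co t0 a p).2)
  have he1 := ee_nonneg ((co t0 a q).1)
  have h4 : ee ((co t0 a p).2) * ee ((co t0 a q).1) ≤
      (Ac t0 a * Mc t0 a ^ (p+1)) * Mc t0 a ^ (q+1) :=
    mul_le_mul h2 h3 he1 (by positivity)
  nlinarith [mul_le_mul_of_nonneg_right hAh (mul_nonneg hp.le hq.le)]

lemma Q_bound (n : ℕ) (i j : Fin 2) :
    ‖∑ kl ∈ Finset.HasAntidiagonal.antidiagonal n, comm ((co t0 a kl.1).2) ((co t0 a kl.2).1) i j‖ ≤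
      Mc t0 a * (((n:ℝ)+1) * Mc t0 a^(n+1)) := by
  calc ‖∑ kl ∈ Finset.HasAntidiagonal.antidiagonal n, comm ((co t0 a kl.1).2) ((co t0 a kl.2).1) i j‖
      ≤ ∑ kl ∈ Finset.HasAntidiagonal.antidiagonal n, ‖comm ((co t0 a kl.1).2) ((co t0 a kl.2).1) i j‖ :=
        norm_sum_le _ _
    _ ≤ ∑ _kl ∈ Finset.HasAntidiagonal.antidiagonal n, Mc t0 a^(n+2) := by
        refine Finset.sum_le_sum fun kl hkl => ?_
        have hn := Finset.HasAntidiagonal.mem_antidiagonal.mp hkl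
        have := comm_entry_bound t0 a kl.1 kl.2 i j
        have hpow : Mc t0 a^(kl.1+1) * Mc t0 a^(kl.2+1) = Mc t0 a^(n+2) := by
          rw [← pow_add]; congr 1; omega
        linarith [hpow ▸ this]
    _ = ((n:ℝ)+1) * Mc t0 a^(n+2) := by
        rw [Finset.sum_const, Finset.Nat.card_antidiagonal, nsmul_eq_mul]
        push_cast; ring
    _ = Mc t0 a * (((n:ℝ)+1) * Mc t0 a^(n+1)) := by rw [pow_succ]; ring

lemma P_bound (m : ℕ) (i j : Fin 2) :
    ‖comm ((co t0 a m).2) (Lm t0 a) i j‖ ≤ (2 * ell t0 a) * (((m:ℝ)+1) * Mc t0 a^(m+1)) := by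
  have h1 := (entry_le (comm ((co t0 a m).2) (Lm t0 a)) i j).trans
    (ee_comm ((co t0 a m).2) (Lm t0 a))
  have h2 := (co_bound t0 a m).2
  have hAh := Ac_le_half t0 a
  have hl := ell_nonneg t0 a
  have hp : (0:ℝ) < Mc t0 a^(m+1) := pow_pos (Mc_pos t0 a) _
  have he2 := ee_nonneg ((co t0 a m).2)
  have hone := np1_ge_one m
  show ‖comm ((co t0 a m).2) (Lm t0 a) i j‖ ≤ (2 * ell t0 a) * (((m:ℝ)+1) * Mc t0 a^(m+1))
  unfold ell at *
  nlinarith [mul_nonneg he2 (ee_nonneg (Lm t0 a)), mul_nonneg hl hp.le,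
    mul_nonneg (mul_nonneg hl hp.le) (by linarith : (0:ℝ) ≤ (m:ℝ))]

lemma P_shift_bound (n : ℕ) (i j : Fin 2) :
    ‖comm ((co t0 a (n+1)).2) (Lm t0 a) i j‖ ≤
      (4 * ell t0 a * Mc t0 a) * (((n:ℝ)+1) * Mc t0 a^(n+1)) := by
  have h := P_bound t0 a (n+1) i j
  have hl := ell_nonneg t0 a
  have hM := (Mc_pos t0 a)
  have hp : (0:ℝ) < Mc t0 a^(n+1) := pow_pos hM _
  have hpow : Mc t0 a^(n+1+1) = Mc t0 a * Mc t0 a^(n+1) := by rw [pow_succ]; ring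
  rw [hpow] at h
  push_cast at h
  have hone := np1_ge_one n
  nlinarith [mul_nonneg (mul_nonneg hl hM.le) hp.le,
    mul_nonneg (mul_nonneg (mul_nonneg hl hM.le) hp.le) (by linarith : (0:ℝ) ≤ (n:ℝ))]

set_option maxHeartbeats 2000000 in
lemma eq1_main (i j : Fin 2) {t : ℂ} (ht : ‖t‖ < (2 * Mc t0 a)⁻¹) :
    ∑' n : ℕ, (((n:ℂ)+1) * (co t0 a n).1 i j) * t^(n+1) =
      (Uim t0 a t * (Lm t0 a + U0m t0 a t) - (Lm t0 a + U0m t0 a t) * Uim t0 a t) i j := by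
  have hM := Mc_pos t0 a
  -- basic norm-summability of entry series
  have hnrm1 : ∀ p q : Fin 2, Summable (fun n => ‖(co t0 a n).1 p q * t^(n+1)‖) :=
    fun p q => sumnorm hM _ 1 (fun n => entry1_bound t0 a n p q) ht
  have hnrm2 : ∀ p q : Fin 2, Summable (fun n => ‖(co t0 a n).2 p q * t^(n+1)‖) :=
    fun p q => sumnorm hM _ 1 (fun n => entry2_bound t0 a n p q) ht
  have hs1 : ∀ p q : Fin 2, Summable (fun n => (co t0 a n).1 p q * t^(n+1)) :=
    fun p q => (hnrm1 p q).of_norm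
  have hs2 : ∀ p q : Fin 2, Summable (fun n => (co t0 a n).2 p q * t^(n+1)) :=
    fun p q => (hnrm2 p q).of_norm
  -- the four types of products as power series
  have hA : ∀ k : Fin 2, Uim t0 a t i k * Lm t0 a k j =
      ∑' m : ℕ, ((co t0 a m).2 i k * Lm t0 a k j) * t^(m+1) := by
    intro k
    show (∑' m : ℕ, (co t0 a m).2 i k * t^(m+1)) * Lm t0 a k j = _
    rw [← tsum_mul_right]
    exact tsum_congr fun m => by ring
  have hC : ∀ k : Fin 2, Lm t0 a i k * Uim t0 a t k j =
      ∑' m : ℕ, (Lm t0 a i k * (co t0 a m).2 k j) * t^(m+1) := by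
    intro k
    show Lm t0 a i k * (∑' m : ℕ, (co t0 a m).2 k j * t^(m+1)) = _
    rw [← tsum_mul_left]
    exact tsum_congr fun m => by ring
  have hBterm : ∀ (x y : ℕ → ℂ) (n : ℕ),
      (∑ kl ∈ Finset.HasAntidiagonal.antidiagonal n, x kl.1 * t^(kl.1+1) * (y kl.2 * t^(kl.2+1))) =
      (∑ kl ∈ Finset.HasAntidiagonal.antidiagonal n, x kl.1 * y kl.2) * t^(n+2) := by
    intro x y n
    rw [Finset.sum_mul]
    refine Finset.sum_congr rfl fun kl hkl => ?_
    have hn := Finset.HasAntidiagonal.mem_antidiagonal.mp hkl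
    have hpow : t^(kl.1+1) * t^(kl.2+1) = t^(n+2) := by rw [← pow_add]; congr 1; omega
    calc x kl.1 * t^(kl.1+1) * (y kl.2 * t^(kl.2+1))
        = x kl.1 * y kl.2 * (t^(kl.1+1) * t^(kl.2+1)) := by ring
      _ = x kl.1 * y kl.2 * t^(n+2) := by rw [hpow]
  have hB : ∀ k : Fin 2, Uim t0 a t i k * U0m t0 a t k j =
      ∑' n : ℕ, (∑ kl ∈ Finset.HasAntidiagonal.antidiagonal n, (co t0 a kl.1).2 i k * (co t0 a kl.2).1 k j) * t^(n+2) := by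
    intro k
    show (∑' m : ℕ, (co t0 a m).2 i k * t^(m+1)) * (∑' m : ℕ, (co t0 a m).1 k j * t^(m+1)) = _
    rw [tsum_mul_tsum_eq_tsum_sum_antidiagonal_of_summable_norm (hnrm2 i k) (hnrm1 k j)]
    exact tsum_congr fun n => hBterm (fun p => (co t0 a p).2 i k) (fun q => (co t0 a q).1 k j) n
  have hD : ∀ k : Fin 2, U0m t0 a t i k * Uim t0 a t k j =
      ∑' n : ℕ, (∑ kl ∈ Finset.HasAntidiagonal.antidiagonal n, (co t0 a kl.1).1 i k * (co t0 a kl.2).2 k j) * t^(n+2) := by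
    intro k
    show (∑' m : ℕ, (co t0 a m).1 i k * t^(m+1)) * (∑' m : ℕ, (co t0 a m).2 k j * t^(m+1)) = _
    rw [tsum_mul_tsum_eq_tsum_sum_antidiagonal_of_summable_norm (hnrm1 i k) (hnrm2 k j)]
    exact tsum_congr fun n => hBterm (fun p => (co t0 a p).1 i k) (fun q => (co t0 a q).2 k j) n
  -- summability of the assembled series
  have sA : ∀ k : Fin 2, Summable (fun m => ((co t0 a m).2 i k * Lm t0 a k j) * t^(m+1)) :=
    fun k => ((hs2 i k).mul_right (Lm t0 a k j)).congr (fun m => by ring)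
  have sC : ∀ k : Fin 2, Summable (fun m => (Lm t0 a i k * (co t0 a m).2 k j) * t^(m+1)) :=
    fun k => ((hs2 k j).mul_left (Lm t0 a i k)).congr (fun m => by ring)
  have sB : ∀ k : Fin 2, Summable (fun n =>
      (∑ kl ∈ Finset.HasAntidiagonal.antidiagonal n, (co t0 a kl.1).2 i k * (co t0 a kl.2).1 k j) * t^(n+2)) := by
    intro k
    have h := (summable_norm_sum_mul_antidiagonal_of_summable_norm (hnrm2 i k) (hnrm1 k j)).of_norm
    exact h.congr (fun n => hBterm (fun p => (co t0 a p).2 i k) (fun q => (co t0 a q).1 k j) n)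
  have sD : ∀ k : Fin 2, Summable (fun n =>
      (∑ kl ∈ Finset.HasAntidiagonal.antidiagonal n, (co t0 a kl.1).1 i k * (co t0 a kl.2).2 k j) * t^(n+2)) := by
    intro k
    have h := (summable_norm_sum_mul_antidiagonal_of_summable_norm (hnrm1 i k) (hnrm2 k j)).of_norm
    exact h.congr (fun n => hBterm (fun p => (co t0 a p).1 i k) (fun q => (co t0 a q).2 k j) n)
  -- expand the matrix entry
  have hexp : (Uim t0 a t * (Lm t0 a + U0m t0 a t) - (Lm t0 a + U0m t0 a t) * Uim t0 a t) i j =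
      ((Uim t0 a t i 0 * Lm t0 a 0 j + Uim t0 a t i 1 * Lm t0 a 1 j) +
       (Uim t0 a t i 0 * U0m t0 a t 0 j + Uim t0 a t i 1 * U0m t0 a t 1 j)) -
      ((Lm t0 a i 0 * Uim t0 a t 0 j + Lm t0 a i 1 * Uim t0 a t 1 j) +
       (U0m t0 a t i 0 * Uim t0 a t 0 j + U0m t0 a t i 1 * Uim t0 a t 1 j)) := by
    simp only [Matrix.sub_apply, Matrix.add_apply, Matrix.mul_apply, Fin.sum_univ_two]
    ring
  rw [hexp, hA 0, hA 1, hB 0, hB 1, hC 0, hC 1, hD 0, hD 1]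
  -- combine pairs of series
  have e1 : (∑' m : ℕ, ((co t0 a m).2 i 0 * Lm t0 a 0 j) * t^(m+1)) +
      (∑' m : ℕ, ((co t0 a m).2 i 1 * Lm t0 a 1 j) * t^(m+1)) =
      ∑' m : ℕ, ((co t0 a m).2 i 0 * Lm t0 a 0 j + (co t0 a m).2 i 1 * Lm t0 a 1 j) * t^(m+1) := by
    rw [← Summable.tsum_add (sA 0) (sA 1)]
    exact tsum_congr fun m => by ring
  have e3 : (∑' m : ℕ, (Lm t0 a i 0 * (co t0 a m).2 0 j) * t^(m+1)) +
      (∑' m : ℕ, (Lm t0 a i 1 * (co t0 a m).2 1 j) * t^(m+1)) =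
      ∑' m : ℕ, (Lm t0 a i 0 * (co t0 a m).2 0 j + Lm t0 a i 1 * (co t0 a m).2 1 j) * t^(m+1) := by
    rw [← Summable.tsum_add (sC 0) (sC 1)]
    exact tsum_congr fun m => by ring
  have e2 : (∑' n : ℕ, (∑ kl ∈ Finset.HasAntidiagonal.antidiagonal n, (co t0 a kl.1).2 i 0 * (co t0 a kl.2).1 0 j) * t^(n+2)) +
      (∑' n : ℕ, (∑ kl ∈ Finset.HasAntidiagonal.antidiagonal n, (co t0 a kl.1).2 i 1 * (co t0 a kl.2).1 1 j) * t^(n+2)) =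
      ∑' n : ℕ, (∑ kl ∈ Finset.HasAntidiagonal.antidiagonal n, ((co t0 a kl.1).2 * (co t0 a kl.2).1) i j) * t^(n+2) := by
    rw [← Summable.tsum_add (sB 0) (sB 1)]
    refine tsum_congr fun n => ?_
    rw [← add_mul, ← Finset.sum_add_distrib]
    congr 1
    refine Finset.sum_congr rfl fun kl _ => ?_
    rw [Matrix.mul_apply, Fin.sum_univ_two]
  have e4 : (∑' n : ℕ, (∑ kl ∈ Finset.HasAntidiagonal.antidiagonal n, (co t0 a kl.1).1 i 0 * (co t0 a kl.2).2 0 j) * t^(n+2)) +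
      (∑' n : ℕ, (∑ kl ∈ Finset.HasAntidiagonal.antidiagonal n, (co t0 a kl.1).1 i 1 * (co t0 a kl.2).2 1 j) * t^(n+2)) =
      ∑' n : ℕ, (∑ kl ∈ Finset.HasAntidiagonal.antidiagonal n, ((co t0 a kl.1).1 * (co t0 a kl.2).2) i j) * t^(n+2) := by
    rw [← Summable.tsum_add (sD 0) (sD 1)]
    refine tsum_congr fun n => ?_
    rw [← add_mul, ← Finset.sum_add_distrib]
    congr 1
    refine Finset.sum_congr rfl fun kl _ => ?_
    rw [Matrix.mul_apply, Fin.sum_univ_two]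
  rw [show ∀ w x y z : ℂ, (w + x) - (y + z) = (w - y) + (x - z) from fun _ _ _ _ => by ring]
  rw [e1, e3, e2, e4]
  -- merge the differences into single series
  have sAc : Summable (fun m : ℕ =>
      ((co t0 a m).2 i 0 * Lm t0 a 0 j + (co t0 a m).2 i 1 * Lm t0 a 1 j) * t^(m+1)) :=
    ((sA 0).add (sA 1)).congr (fun m => by ring)
  have sCc : Summable (fun m : ℕ =>
      (Lm t0 a i 0 * (co t0 a m).2 0 j + Lm t0 a i 1 * (co t0 a m).2 1 j) * t^(m+1)) :=
    ((sC 0).add (sC 1)).congr (fun m => by ring)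
  have sBc : Summable (fun n : ℕ =>
      (∑ kl ∈ Finset.HasAntidiagonal.antidiagonal n, ((co t0 a kl.1).2 * (co t0 a kl.2).1) i j) * t^(n+2)) := by
    refine ((sB 0).add (sB 1)).congr (fun n => ?_)
    rw [← add_mul, ← Finset.sum_add_distrib]
    congr 1
    exact Finset.sum_congr rfl fun kl _ => by rw [Matrix.mul_apply, Fin.sum_univ_two]
  have sDc : Summable (fun n : ℕ =>
      (∑ kl ∈ Finset.HasAntidiagonal.antidiagonal n, ((co t0 a kl.1).1 * (co t0 a kl.2).2) i j) * t^(n+2)) := by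
    refine ((sD 0).add (sD 1)).congr (fun n => ?_)
    rw [← add_mul, ← Finset.sum_add_distrib]
    congr 1
    exact Finset.sum_congr rfl fun kl _ => by rw [Matrix.mul_apply, Fin.sum_univ_two]
  have f1 : (∑' m : ℕ, ((co t0 a m).2 i 0 * Lm t0 a 0 j + (co t0 a m).2 i 1 * Lm t0 a 1 j) * t^(m+1)) -
      (∑' m : ℕ, (Lm t0 a i 0 * (co t0 a m).2 0 j + Lm t0 a i 1 * (co t0 a m).2 1 j) * t^(m+1)) =
      ∑' m : ℕ, comm ((co t0 a m).2) (Lm t0 a) i j * t^(m+1) := by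
    rw [← Summable.tsum_sub sAc sCc]
    exact tsum_congr fun m => by rw [comm_apply]; ring
  have f2 : (∑' n : ℕ, (∑ kl ∈ Finset.HasAntidiagonal.antidiagonal n, ((co t0 a kl.1).2 * (co t0 a kl.2).1) i j) * t^(n+2)) -
      (∑' n : ℕ, (∑ kl ∈ Finset.HasAntidiagonal.antidiagonal n, ((co t0 a kl.1).1 * (co t0 a kl.2).2) i j) * t^(n+2)) =
      ∑' n : ℕ, (∑ kl ∈ Finset.HasAntidiagonal.antidiagonal n,
        comm ((co t0 a kl.1).2) ((co t0 a kl.2).1) i j) * t^(n+2) := by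
    rw [← Summable.tsum_sub sBc sDc]
    refine tsum_congr fun n => ?_
    rw [← sub_mul]
    congr 1
    have hswap : (∑ kl ∈ Finset.HasAntidiagonal.antidiagonal n, ((co t0 a kl.1).1 * (co t0 a kl.2).2) i j) =
        ∑ kl ∈ Finset.HasAntidiagonal.antidiagonal n, ((co t0 a kl.2).1 * (co t0 a kl.1).2) i j :=
      (Finset.Nat.sum_antidiagonal_swap
        (f := fun kl => ((co t0 a kl.1).1 * (co t0 a kl.2).2) i j)).symm
    rw [hswap, ← Finset.sum_sub_distrib]
    exact Finset.sum_congr rfl fun kl _ => rfl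
  rw [f1, f2]
  -- split the linear series and merge with the quadratic one
  have sP : Summable (fun m : ℕ => comm ((co t0 a m).2) (Lm t0 a) i j * t^(m+1)) :=
    (sumnorm hM _ (2 * ell t0 a) (fun m => P_bound t0 a m i j) ht).of_norm
  rw [Summable.tsum_eq_zero_add sP]
  have sPs : Summable (fun n : ℕ => comm ((co t0 a (n+1)).2) (Lm t0 a) i j * t^(n+2)) :=
    sum_shift hM _ (4 * ell t0 a * Mc t0 a) (fun n => P_shift_bound t0 a n i j) ht
  have sQ : Summable (fun n : ℕ => (∑ kl ∈ Finset.HasAntidiagonal.antidiagonal n,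
      comm ((co t0 a kl.1).2) ((co t0 a kl.2).1) i j) * t^(n+2)) :=
    sum_shift hM _ (Mc t0 a) (fun n => Q_bound t0 a n i j) ht
  have hsplit : (∑' n : ℕ, comm ((co t0 a (n+1)).2) (Lm t0 a) i j * t^(n+1+1)) +
      (∑' n : ℕ, (∑ kl ∈ Finset.HasAntidiagonal.antidiagonal n,
        comm ((co t0 a kl.1).2) ((co t0 a kl.2).1) i j) * t^(n+2)) =
      ∑' n : ℕ, (comm ((co t0 a (n+1)).2) (Lm t0 a) i j +
        ∑ kl ∈ Finset.HasAntidiagonal.antidiagonal n,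
          comm ((co t0 a kl.1).2) ((co t0 a kl.2).1) i j) * t^(n+2) := by
    rw [← Summable.tsum_add sPs sQ]
    exact tsum_congr fun n => by ring
  rw [add_assoc, hsplit]
  -- now match with the left-hand side
  have sδ : Summable (fun n : ℕ => (((n:ℂ)+1) * (co t0 a n).1 i j) * t^(n+1)) := by
    refine (sumnorm hM _ 1 (fun n => ?_) ht).of_norm
    rw [norm_mul, norm_n1]
    have h := entry1_plain t0 a n i j
    have hone := np1_ge_one n
    nlinarith [norm_nonneg ((co t0 a n).1 i j)]
  rw [Summable.tsum_eq_zero_add sδ]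
  congr 1
  · rw [c0_zero]
    push_cast
    ring
  · refine tsum_congr fun n => ?_
    have e := eq1_coeff t0 a n i j
    calc (((n+1:ℕ):ℂ)+1) * (co t0 a (n+1)).1 i j * t^(n+1+1)
        = (((n:ℂ)+2) * (co t0 a (n+1)).1 i j) * t^(n+2) := by push_cast; ring
      _ = _ := by rw [e]

end SchAux

open SchAux

/-- **Proposition 5.1**: the system `t·dU₀/dt = [U∞, Λ₀+U₀]`,
`t·dU∞/dt = t[J, −Λ₀−U₀+U∞]` has a solution holomorphic near `t = 0`, given by
convergent power series (without constant terms) whose coefficient matrices have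
entries in `ℚ[θ₀, a]`, and whose `U∞`-component has vanishing diagonal. -/
theorem schlesinger_taylor_matrix_solution (t0 a : ℂ) (ha : a ≠ 0) :
    ∃ R > (0 : ℝ), ∃ U0 Ui : ℂ → Matrix (Fin 2) (Fin 2) ℂ,
      ∃ c0 ci : ℕ → Matrix (Fin 2) (Fin 2) ℂ,
        -- coefficients lie in ℚ[θ₀, a]
        (∀ n, ∀ i j : Fin 2, ∃ P : MvPolynomial (Fin 2) ℚ,
          c0 n i j = (MvPolynomial.aeval ![t0, a]) P) ∧
        (∀ n, ∀ i j : Fin 2, ∃ P : MvPolynomial (Fin 2) ℚ,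
          ci n i j = (MvPolynomial.aeval ![t0, a]) P) ∧
        -- convergent power series representations `U(t) = Σ_{j≥1} U_j t^j`
        (∀ t : ℂ, ‖t‖ < R → ∀ i j : Fin 2,
          Summable (fun n : ℕ => c0 n i j * t ^ (n + 1)) ∧
          Summable (fun n : ℕ => ci n i j * t ^ (n + 1)) ∧
          U0 t i j = (∑' n : ℕ, c0 n i j * t ^ (n + 1)) ∧
          Ui t i j = (∑' n : ℕ, ci n i j * t ^ (n + 1))) ∧
        -- holomorphy in a neighborhood of t = 0
        (∀ i j : Fin 2, AnalyticOnNhd ℂ (fun z => U0 z i j) (Metric.ball 0 R)) ∧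
        (∀ i j : Fin 2, AnalyticOnNhd ℂ (fun z => Ui z i j) (Metric.ball 0 R)) ∧
        -- the system, with Λ₀ = !![θ₀/2 + a, −1; a(θ₀+a), −θ₀/2 − a]
        (∀ t ∈ Metric.ball (0 : ℂ) R,
          (∀ i j : Fin 2, t * deriv (fun z => U0 z i j) t =
            (Ui t * (!![t0 / 2 + a, -1; a * (t0 + a), -t0 / 2 - a] + U0 t) -
             (!![t0 / 2 + a, -1; a * (t0 + a), -t0 / 2 - a] + U0 t) * Ui t) i j) ∧
          (∀ i j : Fin 2, t * deriv (fun z => Ui z i j) t =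
            t * ((Jmat * (-(!![t0 / 2 + a, -1; a * (t0 + a), -t0 / 2 - a]) - U0 t + Ui t) -
                  (-(!![t0 / 2 + a, -1; a * (t0 + a), -t0 / 2 - a]) - U0 t + Ui t) * Jmat) i j)) ∧
          -- the diagonal of U∞ vanishes identically
          Ui t 0 0 = 0 ∧ Ui t 1 1 = 0) := by
  have hM := Mc_pos t0 a
  refine ⟨(2 * Mc t0 a)⁻¹, by positivity, U0m t0 a, Uim t0 a,
    (fun n => (co t0 a n).1), (fun n => (co t0 a n).2), ?_, ?_, ?_, ?_, ?_, ?_⟩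
  · intro n i j
    obtain ⟨P, hP⟩ := (co_mem t0 a n).1 i j
    exact ⟨P, hP.symm⟩
  · intro n i j
    obtain ⟨P, hP⟩ := (co_mem t0 a n).2 i j
    exact ⟨P, hP.symm⟩
  · intro t ht i j
    exact ⟨(sumnorm hM _ 1 (fun n => entry1_bound t0 a n i j) ht).of_norm,
           (sumnorm hM _ 1 (fun n => entry2_bound t0 a n i j) ht).of_norm, rfl, rfl⟩
  · intro i j
    exact powser_analytic hM _ 1 (fun n => entry1_bound t0 a n i j)
  · intro i j
    exact powser_analytic hM _ 1 (fun n => entry2_bound t0 a n i j)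
  · intro t ht
    have htabs : ‖t‖ < (2 * Mc t0 a)⁻¹ := by
      rwa [Metric.mem_ball, Complex.dist_eq, sub_zero] at ht
    have hLrw : !![t0 / 2 + a, -1; a * (t0 + a), -t0 / 2 - a] = Lm t0 a := rfl
    refine ⟨?_, ?_, ?_, ?_⟩
    · intro i j
      have hdd := (powser_hasDeriv hM (fun n => (co t0 a n).1 i j) 1
        (fun n => entry1_bound t0 a n i j) ht).deriv
      have hfun : (fun z => U0m t0 a z i j) =
          (fun z => ∑' n : ℕ, (co t0 a n).1 i j * z^(n+1)) := rfl
      rw [hLrw, hfun, hdd, ← eq1_main t0 a i j htabs, ← tsum_mul_left]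
      exact tsum_congr fun n => by ring
    · intro i j
      have hdd := (powser_hasDeriv hM (fun n => (co t0 a n).2 i j) 1
        (fun n => entry2_bound t0 a n i j) ht).deriv
      have hfun : (fun z => Uim t0 a z i j) =
          (fun z => ∑' n : ℕ, (co t0 a n).2 i j * z^(n+1)) := rfl
      rw [hLrw, hfun, hdd, eq2_main t0 a i j htabs]
      congr 1
      rw [show Jmat * (-(Lm t0 a) - U0m t0 a t + Uim t0 a t) -
            (-(Lm t0 a) - U0m t0 a t + Uim t0 a t) * Jmat =
          SchAux.comm Jmat (-(Lm t0 a) - U0m t0 a t + Uim t0 a t) from rfl, commJ_apply]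
      rfl
    · show (∑' n : ℕ, (co t0 a n).2 0 0 * t^(n+1)) = 0
      rw [tsum_congr (fun n => by rw [ci_diag t0 a n 0, zero_mul] : ∀ n : ℕ,
        (co t0 a n).2 0 0 * t^(n+1) = 0)]
      exact tsum_zero
    · show (∑' n : ℕ, (co t0 a n).2 1 1 * t^(n+1)) = 0
      rw [tsum_congr (fun n => by rw [ci_diag t0 a n 1, zero_mul] : ∀ n : ℕ,
        (co t0 a n).2 1 1 * t^(n+1) = 0)]
      exact tsum_zero
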